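/- arXiv:2207.03186 — 5 statements merged into one kernel-verified Lean document; each statement's English description precedes it below -/
import Mathlib

section
/- For every T ∈ ℝ^{(m·n)×(m·n)} and every positive integer k, the best Kronecker rank-k approximation error of T in Frobenius norm equals the best rank-k approximation error of the rearranged matrix R(T) in Frobenius norm: inf { ‖T − Σ_{j=1}^k A_j ⊗ B_j‖_F : A_j ∈ ℝ^{m×m}, B_j ∈ ℝ^{n×n} } = inf { ‖R(T) − M‖_F : M ∈ ℝ^{m²×n²}, rank(M) ≤ k }. -/
open Matrix Kronecker

/-- Spectral norm (ℓ²→ℓ² operator norm) of a real matrix. -/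
noncomputable def specNorm {p q : Type*} [Fintype p] [Fintype q] [DecidableEq q]
    (S : Matrix p q ℝ) : ℝ :=
  ‖LinearMap.toContinuousLinearMap (Matrix.toEuclideanLin S)‖

/-- Frobenius norm of a real matrix. -/
noncomputable def frobNorm {p q : Type*} [Fintype p] [Fintype q] (S : Matrix p q ℝ) : ℝ :=
  Real.sqrt (∑ i, ∑ j, (S i j) ^ 2)


/-- The rearrangement map sending `T ∈ ℝ^{(m·n)×(m·n)}` to `R(T) ∈ ℝ^{m²×n²}`,
`R(T)_{(i,i'),(p,p')} = T_{(i,p),(i',p')}`. -/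
def rearrange (m n : ℕ) (T : Matrix (Fin m × Fin n) (Fin m × Fin n) ℝ) :
    Matrix (Fin m × Fin m) (Fin n × Fin n) ℝ :=
  Matrix.of fun ii pp => T (ii.1, pp.1) (ii.2, pp.2)

lemma exists_decomp {α β : Type*} [Fintype α] [Fintype β] [DecidableEq β]
    (k : ℕ) (M : Matrix α β ℝ) (h : M.rank ≤ k) :
    ∃ (u : Fin k → α → ℝ) (v : Fin k → β → ℝ),
      M = ∑ j, vecMulVec (u j) (v j) := by
  set W := LinearMap.range M.mulVecLin with hW
  have hfd : FiniteDimensional ℝ W := inferInstance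
  set r := Module.finrank ℝ W with hr
  have hrk : r ≤ k := h
  let b : Module.Basis (Fin r) ℝ W := Module.finBasis ℝ W
  have hcol : ∀ p : β, (fun i => M i p) ∈ W := by
    intro p
    exact ⟨Pi.single p 1, by ext i; simp [Matrix.mulVecLin_apply]⟩
  let col : β → W := fun p => ⟨fun i => M i p, hcol p⟩
  refine ⟨fun j i => if hj : (j : ℕ) < r then ((b ⟨j, hj⟩ : W) : α → ℝ) i else 0,
    fun j p => if hj : (j : ℕ) < r then b.repr (col p) ⟨j, hj⟩ else 0, ?_⟩
  ext i p
  rw [Matrix.sum_apply]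
  have key : ((∑ j : Fin r, b.repr (col p) j • b j : W) : α → ℝ) i = M i p := by
    rw [b.sum_repr (col p)]
  rw [← key]
  push_cast [Submodule.coe_sum]
  rw [Finset.sum_apply]
  rw [Fin.sum_univ_eq_sum_range
    (fun j => vecMulVec (fun i => if hj : j < r then ((b ⟨j, hj⟩ : W) : α → ℝ) i else 0)
      (fun p => if hj : j < r then b.repr (col p) ⟨j, hj⟩ else 0) i p) k]
  rw [← Finset.sum_subset (Finset.range_subset_range.2 hrk)
    (fun x _ hx => by
      simp only [Finset.mem_range, not_lt] at hx
      simp [vecMulVec_apply, dif_neg (not_lt.2 hx)])]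
  rw [Finset.sum_range fun j =>
    vecMulVec (fun i => if hj : j < r then ((b ⟨j, hj⟩ : W) : α → ℝ) i else 0)
      (fun p => if hj : j < r then b.repr (col p) ⟨j, hj⟩ else 0) i p]
  refine Finset.sum_congr rfl fun j _ => ?_
  simp [vecMulVec_apply, mul_comm]

lemma rank_sum_vecMulVec_le {α β : Type*} [Fintype α] [Fintype β] [DecidableEq β]
    (k : ℕ) (u : Fin k → α → ℝ) (v : Fin k → β → ℝ) :
    (∑ j, vecMulVec (u j) (v j)).rank ≤ k := by
  have : (∑ j, vecMulVec (u j) (v j)) =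
      (Matrix.of fun i (j : Fin k) => u j i) * (Matrix.of fun (j : Fin k) p => v j p) := by
    ext i p
    simp [Matrix.mul_apply, vecMulVec_apply, Matrix.sum_apply]
  rw [this]
  calc ((Matrix.of fun i (j : Fin k) => u j i) * (Matrix.of fun (j : Fin k) p => v j p)).rank
      ≤ (Matrix.of fun i (j : Fin k) => u j i).rank := Matrix.rank_mul_le_left _ _
    _ ≤ Fintype.card (Fin k) := Matrix.rank_le_card_width _
    _ = k := Fintype.card_fin k

lemma frobNorm_rearrange (m n : ℕ) (X : Matrix (Fin m × Fin n) (Fin m × Fin n) ℝ) :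
    frobNorm (rearrange m n X) = frobNorm X := by
  unfold frobNorm rearrange
  congr 1
  rw [← Fintype.sum_prod_type', ← Fintype.sum_prod_type']
  exact Fintype.sum_equiv (Equiv.prodProdProdComm (Fin m) (Fin m) (Fin n) (Fin n))
    (fun x => (rearrange m n X) x.1 x.2 ^ 2) (fun x => X x.1 x.2 ^ 2) (fun x => rfl)

lemma rearrange_sub (m n : ℕ) (X Y : Matrix (Fin m × Fin n) (Fin m × Fin n) ℝ) :
    rearrange m n (X - Y) = rearrange m n X - rearrange m n Y := rfl

lemma rearrange_kron (m n : ℕ) (A : Matrix (Fin m) (Fin m) ℝ) (B : Matrix (Fin n) (Fin n) ℝ) :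
    rearrange m n (A ⊗ₖ B) = vecMulVec (fun ii => A ii.1 ii.2) (fun pp => B pp.1 pp.2) := by
  ext ii pp
  simp [rearrange, vecMulVec_apply, kroneckerMap_apply]

lemma rearrange_sum (m n k : ℕ) (F : Fin k → Matrix (Fin m × Fin n) (Fin m × Fin n) ℝ) :
    rearrange m n (∑ j, F j) = ∑ j, rearrange m n (F j) := by
  ext ii pp
  simp [rearrange, Matrix.sum_apply]

/-- The best Kronecker rank-`k` approximation error of `T` in Frobenius norm equals
the best rank-`k` approximation error of the rearranged matrix `R(T)` in Frobenius norm. -/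
theorem kroneckerApprox_eq_lowRankApprox (m n k : ℕ) (hm : 0 < m) (hn : 0 < n) (hk : 0 < k)
    (T : Matrix (Fin m × Fin n) (Fin m × Fin n) ℝ) :
    sInf {c : ℝ | ∃ (A : Fin k → Matrix (Fin m) (Fin m) ℝ)
        (B : Fin k → Matrix (Fin n) (Fin n) ℝ),
        c = frobNorm (T - ∑ j, (A j) ⊗ₖ (B j))} =
      sInf {c : ℝ | ∃ M : Matrix (Fin m × Fin m) (Fin n × Fin n) ℝ,
        M.rank ≤ k ∧ c = frobNorm (rearrange m n T - M)} := by
  congr 1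
  ext c
  constructor
  · rintro ⟨A, B, rfl⟩
    refine ⟨rearrange m n (∑ j, (A j) ⊗ₖ (B j)), ?_, ?_⟩
    · rw [rearrange_sum]
      simp only [rearrange_kron]
      exact rank_sum_vecMulVec_le k _ _
    · rw [← rearrange_sub, frobNorm_rearrange]
  · rintro ⟨M, hM, rfl⟩
    obtain ⟨u, v, rfl⟩ := exists_decomp k M hM
    refine ⟨fun j => Matrix.of fun i i' => u j (i, i'),
      fun j => Matrix.of fun p p' => v j (p, p'), ?_⟩
    rw [← frobNorm_rearrange m n, rearrange_sub, rearrange_sum]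
    simp only [rearrange_kron]
    rfl
end

section
/- Let a ∈ ℝ^m and b ∈ ℝ^n be unit vectors, let A₁ ∈ ℝ^{m×m} and B₁ ∈ ℝ^{n×n} satisfy A₁ a = 0 and B₁ b = 0, let σ₁ ∈ ℝ, and set T = σ₁ (A₁ ⊗ B₁) + (a aᵀ) ⊗ (b bᵀ). Then the infimum over α ∈ ℝ of ‖T − α σ₁ (A₁ ⊗ B₁)‖₂ equals 1, and it is attained at α = 1. -/
open Matrix Kronecker

section aux

variable {m n : ℕ}

/-- specNorm lower bound at a vector -/
lemma specNorm_ge (S : Matrix (Fin m × Fin n) (Fin m × Fin n) ℝ)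
    (v : Fin m × Fin n → ℝ) (hv : ‖(WithLp.equiv 2 _).symm v‖ = 1)
    (hSv : S *ᵥ v = v) : 1 ≤ specNorm S := by
  have h := (LinearMap.toContinuousLinearMap (Matrix.toEuclideanLin S)).le_opNorm
    ((WithLp.equiv 2 _).symm v)
  have h2 : (LinearMap.toContinuousLinearMap (Matrix.toEuclideanLin S))
      ((WithLp.equiv 2 _).symm v) = (WithLp.equiv 2 _).symm v := by
    show Matrix.toEuclideanLin S _ = _
    exact congrArg (WithLp.toLp 2) hSv
  rw [h2, hv, mul_one] at h
  exact h

end aux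

/-- For unit vectors `a`, `b` with `A₁ a = 0`, `B₁ b = 0` and
`T = σ₁ (A₁ ⊗ B₁) + (a aᵀ) ⊗ (b bᵀ)`, the infimum over `α ∈ ℝ` of
`‖T − α σ₁ (A₁ ⊗ B₁)‖₂` equals `1`, and it is attained at `α = 1`. -/
theorem svd_solution_inf_error_eq_one (m n : ℕ) (hm : 0 < m) (hn : 0 < n)
    (a : Fin m → ℝ) (b : Fin n → ℝ)
    (ha : Real.sqrt (∑ i, a i ^ 2) = 1) (hb : Real.sqrt (∑ p, b p ^ 2) = 1)
    (A₁ : Matrix (Fin m) (Fin m) ℝ) (B₁ : Matrix (Fin n) (Fin n) ℝ)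
    (hA : A₁ *ᵥ a = 0) (hB : B₁ *ᵥ b = 0) (σ₁ : ℝ)
    (T : Matrix (Fin m × Fin n) (Fin m × Fin n) ℝ)
    (hT : T = σ₁ • (A₁ ⊗ₖ B₁) + (Matrix.vecMulVec a a) ⊗ₖ (Matrix.vecMulVec b b)) :
    sInf {c : ℝ | ∃ α : ℝ, c = specNorm (T - (α * σ₁) • (A₁ ⊗ₖ B₁))} = 1 ∧
      specNorm (T - ((1 : ℝ) * σ₁) • (A₁ ⊗ₖ B₁)) = 1 := by
  -- basic facts
  have hsa : ∑ i, a i ^ 2 = 1 := by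
    have := congrArg (· ^ 2) ha
    simpa [Real.sq_sqrt (Finset.sum_nonneg fun i _ => sq_nonneg (a i))] using this
  have hsb : ∑ p, b p ^ 2 = 1 := by
    have := congrArg (· ^ 2) hb
    simpa [Real.sq_sqrt (Finset.sum_nonneg fun p _ => sq_nonneg (b p))] using this
  set v : Fin m × Fin n → ℝ := fun ip => a ip.1 * b ip.2 with hvdef
  -- outer product structure
  have houter : (Matrix.vecMulVec a a) ⊗ₖ (Matrix.vecMulVec b b) = Matrix.vecMulVec v v := by
    ext ⟨i, p⟩ ⟨i', p'⟩
    simp [Matrix.kroneckerMap_apply, Matrix.vecMulVec_apply, hvdef]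
    ring
  have hdot : v ⬝ᵥ v = 1 := by
    simp only [dotProduct, hvdef, Fintype.sum_prod_type]
    calc (∑ i, ∑ p, (a i * b p) * (a i * b p))
        = (∑ i, a i ^ 2) * (∑ p, b p ^ 2) := by
          rw [Finset.sum_mul_sum]; congr 1; ext i; congr 1; ext p; ring
      _ = 1 := by rw [hsa, hsb]; ring
  have hvv : Matrix.vecMulVec v v *ᵥ v = v := by
    funext ip
    simp only [Matrix.mulVec, dotProduct, Matrix.vecMulVec_apply]
    simp_rw [mul_assoc, ← Finset.mul_sum]
    rw [show (∑ jq, v jq * v jq) = v ⬝ᵥ v from rfl, hdot, mul_one]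
  have hKv : (A₁ ⊗ₖ B₁) *ᵥ v = 0 := by
    funext ⟨i, p⟩
    simp only [Matrix.mulVec, dotProduct, Matrix.kroneckerMap_apply,
      Fintype.sum_prod_type, Pi.zero_apply]
    calc (∑ i', ∑ p', A₁ i i' * B₁ p p' * (a i' * b p'))
        = (∑ i', A₁ i i' * a i') * (∑ p', B₁ p p' * b p') := by
          rw [Finset.sum_mul_sum]; congr 1; ext i'; congr 1; ext p'; ring
      _ = 0 := by
          have h1 : (∑ i', A₁ i i' * a i') = 0 := congrFun hA i
          rw [h1, zero_mul]
  -- norm of v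
  have hvnorm : ‖(WithLp.equiv 2 (Fin m × Fin n → ℝ)).symm v‖ = 1 := by
    rw [EuclideanSpace.norm_eq]
    show Real.sqrt (∑ ip : Fin m × Fin n, ‖v ip‖ ^ 2) = 1
    have : (∑ ip : Fin m × Fin n, ‖v ip‖ ^ 2) = 1 := by
      have : (∑ ip : Fin m × Fin n, ‖v ip‖ ^ 2) = v ⬝ᵥ v := by
        simp [dotProduct, sq_abs, sq]
      rw [this, hdot]
    rw [this, Real.sqrt_one]
  -- the matrix at parameter α
  have hMα : ∀ α : ℝ, T - (α * σ₁) • (A₁ ⊗ₖ B₁)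
      = ((1 - α) * σ₁) • (A₁ ⊗ₖ B₁) + Matrix.vecMulVec v v := by
    intro α
    rw [hT, houter]
    ext ij kl
    simp [Matrix.add_apply, Matrix.sub_apply, Matrix.smul_apply]
    ring
  -- lower bound: 1 ≤ specNorm at each α
  have hlb : ∀ α : ℝ, 1 ≤ specNorm (T - (α * σ₁) • (A₁ ⊗ₖ B₁)) := by
    intro α
    apply specNorm_ge _ v hvnorm
    rw [hMα α, Matrix.add_mulVec, Matrix.smul_mulVec, hKv, hvv]
    simp
  -- upper bound at α = 1
  have hM1 : T - ((1 : ℝ) * σ₁) • (A₁ ⊗ₖ B₁) = Matrix.vecMulVec v v := by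
    rw [hMα 1]; ext ij kl; simp
  have hub : specNorm (T - ((1 : ℝ) * σ₁) • (A₁ ⊗ₖ B₁)) ≤ 1 := by
    rw [hM1, specNorm]
    apply ContinuousLinearMap.opNorm_le_bound _ zero_le_one
    intro x
    rw [one_mul]
    have hx : (LinearMap.toContinuousLinearMap (Matrix.toEuclideanLin (Matrix.vecMulVec v v))) x
        = (v ⬝ᵥ (WithLp.equiv 2 _) x) • (WithLp.equiv 2 (Fin m × Fin n → ℝ)).symm v := by
      apply (WithLp.equiv 2 (Fin m × Fin n → ℝ)).injective
      simp only [LinearMap.coe_toContinuousLinearMap', WithLp.equiv_apply, Matrix.ofLp_toEuclideanLin_apply]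
      funext ip
      simp only [WithLp.ofLp_smul, WithLp.equiv_symm_apply, WithLp.ofLp_toLp, Pi.smul_apply, smul_eq_mul, Equiv.apply_symm_apply,
        Matrix.mulVec, dotProduct, Matrix.vecMulVec_apply]
      rw [Finset.sum_mul]
      exact Finset.sum_congr rfl fun jq _ => by ring
    rw [hx, norm_smul, hvnorm, mul_one]
    -- Cauchy–Schwarz: |v ⬝ᵥ x| ≤ ‖v‖ ‖x‖ = ‖x‖
    have hcs : v ⬝ᵥ (WithLp.equiv 2 _) x
        = inner ℝ ((WithLp.equiv 2 (Fin m × Fin n → ℝ)).symm v) x := by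
      simp [dotProduct, PiLp.inner_apply, RCLike.inner_apply, WithLp.equiv]
      congr 1
      funext i
      ring
    rw [hcs]
    calc ‖inner ℝ ((WithLp.equiv 2 (Fin m × Fin n → ℝ)).symm v) x‖
        ≤ ‖(WithLp.equiv 2 (Fin m × Fin n → ℝ)).symm v‖ * ‖x‖ := norm_inner_le_norm _ _
      _ = ‖x‖ := by rw [hvnorm, one_mul]
  have hone : specNorm (T - ((1 : ℝ) * σ₁) • (A₁ ⊗ₖ B₁)) = 1 := le_antisymm hub (hlb 1)
  refine ⟨?_, hone⟩
  apply le_antisymm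
  · exact csInf_le ⟨1, fun c ⟨α, hc⟩ => hc ▸ hlb α⟩ ⟨1, hone.symm⟩
  · exact le_csInf ⟨_, 1, rfl⟩ fun c ⟨α, hc⟩ => hc ▸ hlb α
end

section
/- Let a ∈ ℝ^m and b ∈ ℝ^n be unit vectors, let A₁ ∈ ℝ^{m×m} and B₁ ∈ ℝ^{n×n} satisfy A₁ a = 0, A₁ᵀ a = 0, B₁ b = 0 and B₁ᵀ b = 0, let σ₁ ≥ 0 satisfy σ₁ ‖A₁‖₂ ‖B₁‖₂ ≤ 1, and set T = σ₁ (A₁ ⊗ B₁) + (a aᵀ) ⊗ (b bᵀ). Then ‖T‖₂ = 1. -/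
open Matrix Kronecker

lemma specNorm_nonneg' {p q : Type*} [Fintype p] [Fintype q] [DecidableEq q]
    (S : Matrix p q ℝ) : 0 ≤ specNorm S := norm_nonneg _

lemma mulVec_sq_le {p q : Type*} [Fintype p] [Fintype q] [DecidableEq q]
    (S : Matrix p q ℝ) (v : q → ℝ) :
    ∑ i, (S *ᵥ v) i ^ 2 ≤ specNorm S ^ 2 * ∑ j, v j ^ 2 := by
  have h := (LinearMap.toContinuousLinearMap (Matrix.toEuclideanLin S)).le_opNorm
    ((WithLp.equiv 2 (q → ℝ)).symm v)
  rw [LinearMap.coe_toContinuousLinearMap'] at h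
  rw [show (Matrix.toEuclideanLin S) ((WithLp.equiv 2 (q → ℝ)).symm v)
      = (WithLp.equiv 2 (p → ℝ)).symm (S *ᵥ v) from rfl] at h
  rw [EuclideanSpace.norm_eq, EuclideanSpace.norm_eq] at h
  simp only [WithLp.equiv_symm_apply, PiLp.toLp_apply, Real.norm_eq_abs, sq_abs] at h
  have h1 : (0:ℝ) ≤ ∑ i, (S *ᵥ v) i ^ 2 := Finset.sum_nonneg fun i _ => sq_nonneg _
  have h2 : (0:ℝ) ≤ ∑ j, v j ^ 2 := Finset.sum_nonneg fun j _ => sq_nonneg _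
  calc ∑ i, (S *ᵥ v) i ^ 2 = Real.sqrt (∑ i, (S *ᵥ v) i ^ 2) ^ 2 := (Real.sq_sqrt h1).symm
    _ ≤ (specNorm S * Real.sqrt (∑ j, v j ^ 2)) ^ 2 := by
        apply pow_le_pow_left₀ (Real.sqrt_nonneg _) h
    _ = specNorm S ^ 2 * ∑ j, v j ^ 2 := by
        rw [mul_pow, Real.sq_sqrt h2]

lemma kron_mulVec {m n : ℕ} (A : Matrix (Fin m) (Fin m) ℝ) (B : Matrix (Fin n) (Fin n) ℝ)
    (y : Fin m × Fin n → ℝ) (i : Fin m) (p : Fin n) :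
    ((A ⊗ₖ B) *ᵥ y) (i, p) = ∑ j, ∑ q, A i j * B p q * y (j, q) := by
  simp only [Matrix.mulVec, dotProduct, kroneckerMap_apply, Fintype.sum_prod_type]

lemma kron_sq_le {m n : ℕ} (A : Matrix (Fin m) (Fin m) ℝ) (B : Matrix (Fin n) (Fin n) ℝ)
    (y : Fin m × Fin n → ℝ) :
    ∑ ip, ((A ⊗ₖ B) *ᵥ y) ip ^ 2
      ≤ specNorm A ^ 2 * specNorm B ^ 2 * ∑ jq, y jq ^ 2 := by
  set z : Fin m → Fin n → ℝ := fun j => B *ᵥ (fun q => y (j, q)) with hz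
  have key : ∀ i p, ((A ⊗ₖ B) *ᵥ y) (i, p) = (A *ᵥ (fun j => z j p)) i := by
    intro i p
    rw [kron_mulVec]
    simp only [Matrix.mulVec, dotProduct, hz]
    rw [Finset.sum_congr rfl]
    intro j _
    rw [Finset.mul_sum]
    exact Finset.sum_congr rfl fun q _ => by ring
  calc ∑ ip, ((A ⊗ₖ B) *ᵥ y) ip ^ 2
      = ∑ p, ∑ i, ((A *ᵥ (fun j => z j p)) i) ^ 2 := by
        rw [Fintype.sum_prod_type, Finset.sum_comm]
        exact Finset.sum_congr rfl fun p _ => Finset.sum_congr rfl fun i _ => by rw [key]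
    _ ≤ ∑ p, specNorm A ^ 2 * ∑ j, (z j p) ^ 2 :=
        Finset.sum_le_sum fun p _ => mulVec_sq_le A _
    _ = specNorm A ^ 2 * ∑ j, ∑ p, (z j p) ^ 2 := by
        rw [← Finset.mul_sum, Finset.sum_comm]
    _ ≤ specNorm A ^ 2 * ∑ j, (specNorm B ^ 2 * ∑ q, y (j, q) ^ 2) := by
        apply mul_le_mul_of_nonneg_left _ (sq_nonneg _)
        exact Finset.sum_le_sum fun j _ => mulVec_sq_le B _
    _ = specNorm A ^ 2 * specNorm B ^ 2 * ∑ jq, y jq ^ 2 := by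
        rw [← Finset.mul_sum, Fintype.sum_prod_type, mul_assoc]

/-- If `M v = 0` and `N w = 0` componentwise, then `(M ⊗ N)(v ⊗ w) = 0`. -/
lemma kron_mulVec_tensor_eq_zero {m n : ℕ}
    (M : Matrix (Fin m) (Fin m) ℝ) (N : Matrix (Fin n) (Fin n) ℝ)
    (v : Fin m → ℝ) (w : Fin n → ℝ)
    (hM : ∀ i, ∑ j, M i j * v j = 0) (hN : ∀ p, ∑ q, N p q * w q = 0) :
    (M ⊗ₖ N) *ᵥ (fun jq => v jq.1 * w jq.2) = 0 := by
  funext ip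
  obtain ⟨i, p⟩ := ip
  rw [kron_mulVec]
  have step : ∀ j q, M i j * N p q * (v j * w q) = (M i j * v j) * (N p q * w q) := by
    intro j q; ring
  simp only [step]
  simp only [← Finset.mul_sum, hN p, mul_zero, Finset.sum_const_zero, Pi.zero_apply]

/-- For unit vectors `a`, `b` with `A₁ a = 0`, `A₁ᵀ a = 0`, `B₁ b = 0`, `B₁ᵀ b = 0`,
and `σ₁ ≥ 0` with `σ₁ ‖A₁‖₂ ‖B₁‖₂ ≤ 1`, the operator
`T = σ₁ (A₁ ⊗ B₁) + (a aᵀ) ⊗ (b bᵀ)` has spectral norm `1`. -/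
theorem specNorm_T_eq_one (m n : ℕ) (hm : 0 < m) (hn : 0 < n)
    (a : Fin m → ℝ) (b : Fin n → ℝ)
    (ha : Real.sqrt (∑ i, a i ^ 2) = 1) (hb : Real.sqrt (∑ p, b p ^ 2) = 1)
    (A₁ : Matrix (Fin m) (Fin m) ℝ) (B₁ : Matrix (Fin n) (Fin n) ℝ)
    (hA : A₁ *ᵥ a = 0) (hAt : A₁ᵀ *ᵥ a = 0) (hB : B₁ *ᵥ b = 0) (hBt : B₁ᵀ *ᵥ b = 0)
    (σ₁ : ℝ) (hσ : 0 ≤ σ₁) (hbound : σ₁ * specNorm A₁ * specNorm B₁ ≤ 1)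
    (T : Matrix (Fin m × Fin n) (Fin m × Fin n) ℝ)
    (hT : T = σ₁ • (A₁ ⊗ₖ B₁) + (Matrix.vecMulVec a a) ⊗ₖ (Matrix.vecMulVec b b)) :
    specNorm T = 1 := by
  have ha0 : (0:ℝ) ≤ ∑ i, a i ^ 2 := Finset.sum_nonneg fun _ _ => sq_nonneg _
  have hb0 : (0:ℝ) ≤ ∑ p, b p ^ 2 := Finset.sum_nonneg fun _ _ => sq_nonneg _
  have ha' : ∑ i, a i ^ 2 = 1 := by rw [← Real.sq_sqrt ha0, ha]; norm_num
  have hb' : ∑ p, b p ^ 2 = 1 := by rw [← Real.sq_sqrt hb0, hb]; norm_num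
  set u : Fin m × Fin n → ℝ := fun jq => a jq.1 * b jq.2 with hu_def
  have hu : ∑ jq, u jq ^ 2 = 1 := by
    simp only [hu_def, mul_pow, Fintype.sum_prod_type, ← Finset.mul_sum, hb', mul_one, ha']
  have huu : ∑ jq, u jq * u jq = 1 := by simpa [pow_two] using hu
  -- componentwise kernel conditions
  have hAcol : ∀ i, ∑ j, A₁ i j * a j = 0 := fun i => by
    have := congrFun hA i; simpa [Matrix.mulVec, dotProduct] using this
  have hBcol : ∀ p, ∑ q, B₁ p q * b q = 0 := fun p => by
    have := congrFun hB p; simpa [Matrix.mulVec, dotProduct] using this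
  have hArow : ∀ j, ∑ i, A₁ᵀ j i * a i = 0 := fun j => by
    have := congrFun hAt j; simpa [Matrix.mulVec, dotProduct] using this
  have hBrow : ∀ q, ∑ p, B₁ᵀ q p * b p = 0 := fun q => by
    have := congrFun hBt q; simpa [Matrix.mulVec, dotProduct] using this
  have hKu : (A₁ ⊗ₖ B₁) *ᵥ u = 0 := kron_mulVec_tensor_eq_zero A₁ B₁ a b hAcol hBcol
  have hKtu : (A₁ᵀ ⊗ₖ B₁ᵀ) *ᵥ u = 0 := kron_mulVec_tensor_eq_zero A₁ᵀ B₁ᵀ a b hArow hBrow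
  -- outer product action
  have hOuter : ∀ x : Fin m × Fin n → ℝ,
      ((Matrix.vecMulVec a a) ⊗ₖ (Matrix.vecMulVec b b)) *ᵥ x = (∑ jq, x jq * u jq) • u := by
    intro x
    funext ip
    obtain ⟨i, p⟩ := ip
    simp only [Matrix.mulVec, dotProduct, kroneckerMap_apply, vecMulVec_apply,
      Pi.smul_apply, smul_eq_mul, hu_def]
    rw [Finset.sum_mul]
    exact Finset.sum_congr rfl fun jq _ => by ring
  -- orthogonality of range of A⊗B to u
  have hOrth : ∀ y : Fin m × Fin n → ℝ, ∑ ip, ((A₁ ⊗ₖ B₁) *ᵥ y) ip * u ip = 0 := by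
    intro y
    have : ∑ ip, ((A₁ ⊗ₖ B₁) *ᵥ y) ip * u ip = ((A₁ ⊗ₖ B₁) *ᵥ y) ⬝ᵥ u := rfl
    rw [this, dotProduct_comm, Matrix.dotProduct_mulVec, ← Matrix.mulVec_transpose]
    have htr : (A₁ ⊗ₖ B₁)ᵀ = A₁ᵀ ⊗ₖ B₁ᵀ := Matrix.kroneckerMap_transpose _ _ _
    rw [htr, hKtu]
    simp [dotProduct]
  -- T applied to u
  have hTu : T *ᵥ u = u := by
    rw [hT, Matrix.add_mulVec, Matrix.smul_mulVec, hKu, smul_zero, zero_add,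
      hOuter u, huu, one_smul]
  -- expansion lemma
  have expand : ∀ (s t : ℝ) (w v : Fin m × Fin n → ℝ),
      ∑ ip, (s * w ip + t * v ip) ^ 2
        = s ^ 2 * ∑ ip, w ip ^ 2 + 2 * s * t * (∑ ip, w ip * v ip) + t ^ 2 * ∑ ip, v ip ^ 2 := by
    intro s t w v
    have h : ∀ ip : Fin m × Fin n, (s * w ip + t * v ip) ^ 2
        = s ^ 2 * w ip ^ 2 + 2 * s * t * (w ip * v ip) + t ^ 2 * v ip ^ 2 := fun ip => by ring
    simp_rw [h, Finset.sum_add_distrib, Finset.mul_sum]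
  -- upper bound
  have upper : specNorm T ≤ 1 := by
    apply ContinuousLinearMap.opNorm_le_bound _ zero_le_one
    intro x
    rw [one_mul]
    set xv : Fin m × Fin n → ℝ := WithLp.equiv 2 _ x with hxv
    set c : ℝ := ∑ jq, xv jq * u jq with hc
    set y : Fin m × Fin n → ℝ := fun jq => xv jq - c * u jq with hy
    have hyu : ∑ jq, y jq * u jq = 0 := by
      simp only [hy, sub_mul, Finset.sum_sub_distrib, mul_assoc, ← Finset.mul_sum, huu, ← hc]
      ring
    have hxfun : xv = y + c • u := funext fun jq => by
      simp [hy, Pi.add_apply, Pi.smul_apply, smul_eq_mul]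
    have hTx : T *ᵥ xv = fun ip => σ₁ * ((A₁ ⊗ₖ B₁) *ᵥ y) ip + c * u ip := by
      have h1 : (A₁ ⊗ₖ B₁) *ᵥ xv = (A₁ ⊗ₖ B₁) *ᵥ y := by
        rw [hxfun, Matrix.mulVec_add, Matrix.mulVec_smul, hKu, smul_zero, add_zero]
      rw [hT, Matrix.add_mulVec, Matrix.smul_mulVec, h1, hOuter xv, ← hc]
      funext ip
      simp [Pi.add_apply, Pi.smul_apply, smul_eq_mul]
    -- norms as sums of squares
    have hnx : ‖x‖ = Real.sqrt (∑ ip, xv ip ^ 2) := by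
      rw [EuclideanSpace.norm_eq]
      congr 1
      exact Finset.sum_congr rfl fun ip _ => by rw [Real.norm_eq_abs, sq_abs]; rfl
    have hfx : ‖(LinearMap.toContinuousLinearMap (Matrix.toEuclideanLin T)) x‖
        = Real.sqrt (∑ ip, (T *ᵥ xv) ip ^ 2) := by
      rw [LinearMap.coe_toContinuousLinearMap', EuclideanSpace.norm_eq]
      congr 1
      exact Finset.sum_congr rfl fun ip _ => by rw [Real.norm_eq_abs, sq_abs]; rfl
    show ‖(LinearMap.toContinuousLinearMap (Matrix.toEuclideanLin T)) x‖ ≤ ‖x‖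
    rw [hfx, hnx]
    apply Real.sqrt_le_sqrt
    -- key inequality on sums of squares
    have e1 : ∑ ip, (T *ᵥ xv) ip ^ 2
        = σ₁ ^ 2 * ∑ ip, ((A₁ ⊗ₖ B₁) *ᵥ y) ip ^ 2 + c ^ 2 := by
      rw [hTx]
      rw [expand σ₁ c ((A₁ ⊗ₖ B₁) *ᵥ y) u, hOrth y, hu]
      ring
    have e2 : ∑ ip, xv ip ^ 2 = ∑ ip, y ip ^ 2 + c ^ 2 := by
      have : ∑ ip, xv ip ^ 2 = ∑ ip, (1 * y ip + c * u ip) ^ 2 := by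
        refine Finset.sum_congr rfl fun ip _ => ?_
        rw [hxfun]; simp [Pi.add_apply, Pi.smul_apply, smul_eq_mul]
      rw [this, expand 1 c y u, hyu, hu]
      ring
    rw [e1, e2]
    have hk := kron_sq_le A₁ B₁ y
    have hy0 : (0:ℝ) ≤ ∑ ip, y ip ^ 2 := Finset.sum_nonneg fun _ _ => sq_nonneg _
    have hnA := specNorm_nonneg' A₁
    have hnB := specNorm_nonneg' B₁
    have hsq : σ₁ ^ 2 * (specNorm A₁ ^ 2 * specNorm B₁ ^ 2) ≤ 1 := by
      nlinarith [mul_nonneg (mul_nonneg hσ hnA) hnB]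
    nlinarith [mul_le_mul_of_nonneg_left hk (sq_nonneg σ₁)]
  -- lower bound
  have lower : 1 ≤ specNorm T := by
    have h := (LinearMap.toContinuousLinearMap (Matrix.toEuclideanLin T)).le_opNorm
      ((WithLp.equiv 2 ((Fin m × Fin n) → ℝ)).symm u)
    rw [LinearMap.coe_toContinuousLinearMap', show (Matrix.toEuclideanLin T)
        ((WithLp.equiv 2 ((Fin m × Fin n) → ℝ)).symm u)
        = (WithLp.equiv 2 ((Fin m × Fin n) → ℝ)).symm (T *ᵥ u) from rfl,
      hTu] at h
    have hnu : ‖(WithLp.equiv 2 ((Fin m × Fin n) → ℝ)).symm u‖ = 1 := by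
      rw [EuclideanSpace.norm_eq]
      have : ∑ ip, ‖((WithLp.equiv 2 ((Fin m × Fin n) → ℝ)).symm u) ip‖ ^ 2 = ∑ ip, u ip ^ 2 :=
        Finset.sum_congr rfl fun ip _ => by
          rw [WithLp.equiv_symm_apply, PiLp.toLp_apply, Real.norm_eq_abs, sq_abs]
      rw [this, hu, Real.sqrt_one]
    rw [hnu, mul_one] at h
    exact h
  linarith
end

section
/- Assume λ > 0 and μ > 0, and let (A^(ℓ), B^(ℓ)) be an alternating minimization sequence for F_{λ,μ}. Then the sequence (A^(ℓ), B^(ℓ)) is bounded and possesses at least one accumulation point, i.e., there exist (A*, B*) and a strictly increasing function φ : ℕ → ℕ such that (A^(φ(ℓ)), B^(φ(ℓ))) converges to (A*, B*). -/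
open Matrix Kronecker

/-- The regularized cost function
`F_{λ,μ}(A,B) = ‖T − ∑ⱼ Aⱼ ⊗ Bⱼ‖₂ + λ ∑ⱼ ‖Aⱼ‖_F² + μ ∑ⱼ ‖Bⱼ‖_F²`. -/
noncomputable def F (m n k : ℕ) (T : Matrix (Fin m × Fin n) (Fin m × Fin n) ℝ)
    (lam mu : ℝ) (A : Fin k → Matrix (Fin m) (Fin m) ℝ)
    (B : Fin k → Matrix (Fin n) (Fin n) ℝ) : ℝ :=
  specNorm (T - ∑ j, (A j) ⊗ₖ (B j)) + lam * ∑ j, frobNorm (A j) ^ 2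
    + mu * ∑ j, frobNorm (B j) ^ 2


lemma frobNorm_sq {p q : Type*} [Fintype p] [Fintype q] (S : Matrix p q ℝ) :
    frobNorm S ^ 2 = ∑ i, ∑ j, S i j ^ 2 := by
  rw [frobNorm, Real.sq_sqrt]
  positivity

lemma frobNorm_zero {p q : Type*} [Fintype p] [Fintype q] :
    frobNorm (0 : Matrix p q ℝ) = 0 := by
  simp [frobNorm]

set_option synthInstance.maxHeartbeats 1000000 in
set_option maxHeartbeats 1000000 in
/-- For `λ, μ > 0`, any alternating minimization sequence for `F_{λ,μ}` is bounded
and possesses at least one accumulation point. -/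
theorem alternating_sequence_bounded_and_has_accumulation_point
    (m n k : ℕ) (hm : 0 < m) (hn : 0 < n) (hk : 0 < k)
    (T : Matrix (Fin m × Fin n) (Fin m × Fin n) ℝ)
    (lam mu : ℝ) (hlam : 0 < lam) (hmu : 0 < mu)
    (A : ℕ → Fin k → Matrix (Fin m) (Fin m) ℝ)
    (B : ℕ → Fin k → Matrix (Fin n) (Fin n) ℝ)
    (hA : ∀ ℓ, ∀ A' : Fin k → Matrix (Fin m) (Fin m) ℝ,
      F m n k T lam mu (A (ℓ + 1)) (B ℓ) ≤ F m n k T lam mu A' (B ℓ))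
    (hB : ∀ ℓ, ∀ B' : Fin k → Matrix (Fin n) (Fin n) ℝ,
      F m n k T lam mu (A (ℓ + 1)) (B (ℓ + 1)) ≤ F m n k T lam mu (A (ℓ + 1)) B') :
    (∃ C : ℝ, ∀ ℓ, (∑ j, frobNorm (A ℓ j) ^ 2) + (∑ j, frobNorm (B ℓ j) ^ 2) ≤ C) ∧
    (∃ (Astar : Fin k → Matrix (Fin m) (Fin m) ℝ)
       (Bstar : Fin k → Matrix (Fin n) (Fin n) ℝ) (φ : ℕ → ℕ), StrictMono φ ∧
       Filter.Tendsto (fun ℓ => (A (φ ℓ), B (φ ℓ))) Filter.atTop (nhds (Astar, Bstar))) := by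
  have hspec : ∀ (S : Matrix (Fin m × Fin n) (Fin m × Fin n) ℝ), 0 ≤ specNorm S :=
    fun S => norm_nonneg _
  have hAnn : ∀ ℓ, (0:ℝ) ≤ ∑ j, frobNorm (A ℓ j) ^ 2 :=
    fun ℓ => Finset.sum_nonneg fun j _ => sq_nonneg _
  have hBnn : ∀ ℓ, (0:ℝ) ≤ ∑ j, frobNorm (B ℓ j) ^ 2 :=
    fun ℓ => Finset.sum_nonneg fun j _ => sq_nonneg _
  set C0 : ℝ := specNorm T + mu * ∑ j, frobNorm (B 0 j) ^ 2 with hC0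
  have key : ∀ ℓ, F m n k T lam mu (A (ℓ+1)) (B (ℓ+1)) ≤ C0 := by
    have h3 : F m n k T lam mu (fun _ => 0) (B 0) = C0 := by
      simp [F, frobNorm_zero, hC0]
    have base : F m n k T lam mu (A 1) (B 1) ≤ C0 := by
      have h1 := hB 0 (B 0)
      have h2 := hA 0 (fun _ => 0)
      linarith
    intro ℓ
    induction ℓ with
    | zero => exact base
    | succ p ih =>
      have h1 := hB (p+1) (B (p+1))
      have h2 := hA (p+1) (A (p+1))
      linarith
  have hbdd : ∀ ℓ, (∑ j, frobNorm (A (ℓ+1) j) ^ 2) + (∑ j, frobNorm (B (ℓ+1) j) ^ 2)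
      ≤ C0/lam + C0/mu := by
    intro ℓ
    have hk := key ℓ
    rw [F] at hk
    have hSA : (∑ j, frobNorm (A (ℓ+1) j) ^ 2) ≤ C0 / lam := by
      rw [le_div_iff₀ hlam]
      nlinarith [hspec (T - ∑ j, (A (ℓ+1) j) ⊗ₖ (B (ℓ+1) j)), hBnn (ℓ+1),
        mul_nonneg hmu.le (hBnn (ℓ+1))]
    have hSB : (∑ j, frobNorm (B (ℓ+1) j) ^ 2) ≤ C0 / mu := by
      rw [le_div_iff₀ hmu]
      nlinarith [hspec (T - ∑ j, (A (ℓ+1) j) ⊗ₖ (B (ℓ+1) j)), hAnn (ℓ+1),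
        mul_nonneg hlam.le (hAnn (ℓ+1))]
    linarith
  set C : ℝ := max ((∑ j, frobNorm (A 0 j) ^ 2) + (∑ j, frobNorm (B 0 j) ^ 2))
    (C0/lam + C0/mu) with hCdef
  have hC : ∀ ℓ, (∑ j, frobNorm (A ℓ j) ^ 2) + (∑ j, frobNorm (B ℓ j) ^ 2) ≤ C := by
    intro ℓ
    cases ℓ with
    | zero => exact le_max_left _ _
    | succ p => exact (hbdd p).trans (le_max_right _ _)
  refine ⟨⟨C, hC⟩, ?_⟩
  -- entrywise bounds
  set R : ℝ := Real.sqrt C with hR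
  have hAent : ∀ ℓ j i i', A ℓ j i i' ∈ Set.Icc (-R) R := by
    intro ℓ j i i'
    have h1 : frobNorm (A ℓ j) ^ 2 ≤ C := by
      have h : frobNorm (A ℓ j) ^ 2 ≤ ∑ x, frobNorm (A ℓ x) ^ 2 :=
        Finset.single_le_sum (f := fun x => frobNorm (A ℓ x) ^ 2)
          (fun _ _ => sq_nonneg _) (Finset.mem_univ j)
      linarith [hC ℓ, hBnn ℓ]
    have h2 : (A ℓ j i i') ^ 2 ≤ frobNorm (A ℓ j) ^ 2 := by
      rw [frobNorm_sq]
      calc (A ℓ j i i') ^ 2 ≤ ∑ y, (A ℓ j i y) ^ 2 :=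
            Finset.single_le_sum (f := fun y => (A ℓ j i y) ^ 2)
              (fun _ _ => sq_nonneg _) (Finset.mem_univ i')
        _ ≤ ∑ x, ∑ y, (A ℓ j x y) ^ 2 :=
            Finset.single_le_sum (f := fun x => ∑ y, (A ℓ j x y) ^ 2)
              (fun _ _ => Finset.sum_nonneg fun _ _ => sq_nonneg _) (Finset.mem_univ i)
    have := Real.abs_le_sqrt (h2.trans h1)
    rw [Set.mem_Icc]
    constructor <;> [linarith [abs_le.mp this] ; linarith [abs_le.mp this]]
  have hBent : ∀ ℓ j i i', B ℓ j i i' ∈ Set.Icc (-R) R := by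
    intro ℓ j i i'
    have h1 : frobNorm (B ℓ j) ^ 2 ≤ C := by
      have h : frobNorm (B ℓ j) ^ 2 ≤ ∑ x, frobNorm (B ℓ x) ^ 2 :=
        Finset.single_le_sum (f := fun x => frobNorm (B ℓ x) ^ 2)
          (fun _ _ => sq_nonneg _) (Finset.mem_univ j)
      linarith [hC ℓ, hAnn ℓ]
    have h2 : (B ℓ j i i') ^ 2 ≤ frobNorm (B ℓ j) ^ 2 := by
      rw [frobNorm_sq]
      calc (B ℓ j i i') ^ 2 ≤ ∑ y, (B ℓ j i y) ^ 2 :=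
            Finset.single_le_sum (f := fun y => (B ℓ j i y) ^ 2)
              (fun _ _ => sq_nonneg _) (Finset.mem_univ i')
        _ ≤ ∑ x, ∑ y, (B ℓ j x y) ^ 2 :=
            Finset.single_le_sum (f := fun x => ∑ y, (B ℓ j x y) ^ 2)
              (fun _ _ => Finset.sum_nonneg fun _ _ => sq_nonneg _) (Finset.mem_univ i)
    have := Real.abs_le_sqrt (h2.trans h1)
    rw [Set.mem_Icc]
    constructor <;> [linarith [abs_le.mp this] ; linarith [abs_le.mp this]]
  set KA : Set (Fin k → Matrix (Fin m) (Fin m) ℝ) :=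
    Set.univ.pi fun _ => Set.univ.pi fun _ => Set.univ.pi fun _ => Set.Icc (-R) R with hKA
  set KB : Set (Fin k → Matrix (Fin n) (Fin n) ℝ) :=
    Set.univ.pi fun _ => Set.univ.pi fun _ => Set.univ.pi fun _ => Set.Icc (-R) R with hKB
  have hKAc : IsCompact KA :=
    isCompact_univ_pi fun _ => isCompact_univ_pi fun _ => isCompact_univ_pi fun _ =>
      isCompact_Icc
  have hKBc : IsCompact KB :=
    isCompact_univ_pi fun _ => isCompact_univ_pi fun _ => isCompact_univ_pi fun _ =>
      isCompact_Icc
  have hKc : IsCompact (KA ×ˢ KB) := hKAc.prod hKBc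
  have hmem : ∀ ℓ, (A ℓ, B ℓ) ∈ KA ×ˢ KB := by
    intro ℓ
    constructor
    · intro j _; intro i _; intro i' _; exact hAent ℓ j i i'
    · intro j _; intro i _; intro i' _; exact hBent ℓ j i i'
  haveI : FirstCountableTopology (Matrix (Fin m) (Fin m) ℝ) :=
    inferInstanceAs (FirstCountableTopology (Fin m → Fin m → ℝ))
  haveI : FirstCountableTopology (Matrix (Fin n) (Fin n) ℝ) :=
    inferInstanceAs (FirstCountableTopology (Fin n → Fin n → ℝ))
  obtain ⟨⟨Astar, Bstar⟩, -, φ, hφ, hconv⟩ := hKc.tendsto_subseq hmem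
  exact ⟨Astar, Bstar, φ, hφ, hconv⟩
end

section
/- Assume λ > 0 and μ > 0, and let (A^(ℓ), B^(ℓ)) be an alternating minimization sequence for F_{λ,μ}. Then every accumulation point (A*, B*) of the sequence (A^(ℓ), B^(ℓ)) is a partial optimum of F_{λ,μ}: F_{λ,μ}(A*,B*) ≤ F_{λ,μ}(A,B*) for all A ∈ (ℝ^{m×m})^k and F_{λ,μ}(A*,B*) ≤ F_{λ,μ}(A*,B) for all B ∈ (ℝ^{n×n})^k. -/
open Matrix Kronecker

lemma specNorm_cont {p q : Type*} [Fintype p] [Fintype q] [DecidableEq q] :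
    Continuous (specNorm (p := p) (q := q)) := by
  unfold specNorm
  exact continuous_norm.comp (LinearMap.continuous_of_finiteDimensional
    ((LinearMap.toContinuousLinearMap : (EuclideanSpace ℝ q →ₗ[ℝ] EuclideanSpace ℝ p) ≃ₗ[ℝ] _).toLinearMap.comp
      (Matrix.toEuclideanLin : Matrix p q ℝ ≃ₗ[ℝ] _).toLinearMap))

lemma kron_cont {α p q r s : Type*} [TopologicalSpace α]
    {f : α → Matrix p q ℝ} {g : α → Matrix r s ℝ} (hf : Continuous f) (hg : Continuous g) :
    Continuous (fun a => (f a) ⊗ₖ (g a)) := by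
  apply continuous_matrix; intro i j
  exact (hf.matrix_elem i.1 j.1).mul (hg.matrix_elem i.2 j.2)

lemma frobNorm_cont {α p q : Type*} [TopologicalSpace α] [Fintype p] [Fintype q]
    {f : α → Matrix p q ℝ} (hf : Continuous f) : Continuous (fun a => frobNorm (f a)) := by
  unfold frobNorm
  exact Real.continuous_sqrt.comp (by
    apply continuous_finset_sum; intro i _
    exact continuous_finset_sum _ fun j _ => (hf.matrix_elem i j).pow 2)

lemma frobNorm_nonneg {p q : Type*} [Fintype p] [Fintype q] (S : Matrix p q ℝ) :
    0 ≤ frobNorm S := Real.sqrt_nonneg _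

lemma F_cont (m n k : ℕ) (T : Matrix (Fin m × Fin n) (Fin m × Fin n) ℝ) (lam mu : ℝ) :
    Continuous (fun p : (Fin k → Matrix (Fin m) (Fin m) ℝ) × (Fin k → Matrix (Fin n) (Fin n) ℝ) =>
      F m n k T lam mu p.1 p.2) := by
  unfold F
  apply Continuous.add
  apply Continuous.add
  · exact specNorm_cont.comp (continuous_const.sub (continuous_finset_sum _ fun j _ =>
      kron_cont ((continuous_apply j).comp continuous_fst) ((continuous_apply j).comp continuous_snd)))
  · exact continuous_const.mul (continuous_finset_sum _ fun j _ =>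
      (frobNorm_cont ((continuous_apply j).comp continuous_fst)).pow 2)
  · exact continuous_const.mul (continuous_finset_sum _ fun j _ =>
      (frobNorm_cont ((continuous_apply j).comp continuous_snd)).pow 2)

lemma F_nonneg (m n k : ℕ) (T : Matrix (Fin m × Fin n) (Fin m × Fin n) ℝ)
    {lam mu : ℝ} (hlam : 0 ≤ lam) (hmu : 0 ≤ mu) (A : Fin k → Matrix (Fin m) (Fin m) ℝ)
    (B : Fin k → Matrix (Fin n) (Fin n) ℝ) : 0 ≤ F m n k T lam mu A B := by
  unfold F specNorm
  have h1 : (0:ℝ) ≤ lam * ∑ j, frobNorm (A j) ^ 2 :=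
    mul_nonneg hlam (Finset.sum_nonneg fun j _ => sq_nonneg _)
  have h2 : (0:ℝ) ≤ mu * ∑ j, frobNorm (B j) ^ 2 :=
    mul_nonneg hmu (Finset.sum_nonneg fun j _ => sq_nonneg _)
  positivity

/-- For `λ, μ > 0`, every accumulation point of an alternating minimization
sequence for `F_{λ,μ}` is a partial optimum of `F_{λ,μ}`. -/
theorem accumulation_point_is_partial_optimum
    (m n k : ℕ) (hm : 0 < m) (hn : 0 < n) (hk : 0 < k)
    (T : Matrix (Fin m × Fin n) (Fin m × Fin n) ℝ)
    (lam mu : ℝ) (hlam : 0 < lam) (hmu : 0 < mu)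
    (A : ℕ → Fin k → Matrix (Fin m) (Fin m) ℝ)
    (B : ℕ → Fin k → Matrix (Fin n) (Fin n) ℝ)
    (hA : ∀ ℓ, ∀ A' : Fin k → Matrix (Fin m) (Fin m) ℝ,
      F m n k T lam mu (A (ℓ + 1)) (B ℓ) ≤ F m n k T lam mu A' (B ℓ))
    (hB : ∀ ℓ, ∀ B' : Fin k → Matrix (Fin n) (Fin n) ℝ,
      F m n k T lam mu (A (ℓ + 1)) (B (ℓ + 1)) ≤ F m n k T lam mu (A (ℓ + 1)) B')
    (Astar : Fin k → Matrix (Fin m) (Fin m) ℝ)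
    (Bstar : Fin k → Matrix (Fin n) (Fin n) ℝ)
    (φ : ℕ → ℕ) (hφ : StrictMono φ)
    (hlim : Filter.Tendsto (fun ℓ => (A (φ ℓ), B (φ ℓ))) Filter.atTop
      (nhds (Astar, Bstar))) :
    (∀ A' : Fin k → Matrix (Fin m) (Fin m) ℝ,
      F m n k T lam mu Astar Bstar ≤ F m n k T lam mu A' Bstar) ∧
    (∀ B' : Fin k → Matrix (Fin n) (Fin n) ℝ,
      F m n k T lam mu Astar Bstar ≤ F m n k T lam mu Astar B') := by
  set G := fun p : (Fin k → Matrix (Fin m) (Fin m) ℝ) × (Fin k → Matrix (Fin n) (Fin n) ℝ) =>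
      F m n k T lam mu p.1 p.2 with hG
  have hGcont := F_cont m n k T lam mu
  set c : ℕ → ℝ := fun ℓ => F m n k T lam mu (A ℓ) (B ℓ) with hc_def
  have hstep1 : ∀ ℓ, F m n k T lam mu (A (ℓ + 1)) (B ℓ) ≤ c ℓ := fun ℓ => hA ℓ (A ℓ)
  have hstep2 : ∀ ℓ, c (ℓ + 1) ≤ F m n k T lam mu (A (ℓ + 1)) (B ℓ) := fun ℓ => hB ℓ (B ℓ)
  have hanti : Antitone c := antitone_nat_of_succ_le (fun ℓ => le_trans (hstep2 ℓ) (hstep1 ℓ))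
  have hbdd : BddBelow (Set.range c) := by
    refine ⟨0, ?_⟩
    rintro x ⟨ℓ, rfl⟩
    exact F_nonneg m n k T hlam.le hmu.le _ _
  have hconv : Filter.Tendsto c Filter.atTop (nhds (⨅ ℓ, c ℓ)) :=
    tendsto_atTop_ciInf hanti hbdd
  have hlimA : Filter.Tendsto (fun ℓ => A (φ ℓ)) Filter.atTop (nhds Astar) :=
    (continuous_fst.tendsto _).comp hlim
  have hlimB : Filter.Tendsto (fun ℓ => B (φ ℓ)) Filter.atTop (nhds Bstar) :=
    (continuous_snd.tendsto _).comp hlim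
  have hsub : Filter.Tendsto (fun ℓ => c (φ ℓ)) Filter.atTop
      (nhds (F m n k T lam mu Astar Bstar)) := by
    have h := (hGcont.tendsto (Astar, Bstar)).comp hlim
    exact h
  have hEq : (⨅ ℓ, c ℓ) = F m n k T lam mu Astar Bstar :=
    tendsto_nhds_unique (hconv.comp (hφ.tendsto_atTop)) hsub
  have hc : Filter.Tendsto c Filter.atTop (nhds (F m n k T lam mu Astar Bstar)) :=
    hEq ▸ hconv
  have hd : Filter.Tendsto (fun ℓ => F m n k T lam mu (A (ℓ + 1)) (B ℓ)) Filter.atTop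
      (nhds (F m n k T lam mu Astar Bstar)) := by
    refine tendsto_of_tendsto_of_tendsto_of_le_of_le
      (hc.comp (Filter.tendsto_add_atTop_nat 1)) hc (fun ℓ => hstep2 ℓ) (fun ℓ => hstep1 ℓ)
  constructor
  · intro A'
    have h1 : Filter.Tendsto (fun ℓ => F m n k T lam mu A' (B (φ ℓ))) Filter.atTop
        (nhds (F m n k T lam mu A' Bstar)) := by
      have h := (hGcont.tendsto (A', Bstar)).comp (Filter.Tendsto.prodMk_nhds (tendsto_const_nhds (x := A') (α := ℕ)) hlimB)
      exact h
    exact le_of_tendsto_of_tendsto' (hd.comp hφ.tendsto_atTop) h1 (fun ℓ => hA (φ ℓ) A')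
  · intro B'
    have h1 : Filter.Tendsto (fun ℓ => F m n k T lam mu (A (φ ℓ)) B') Filter.atTop
        (nhds (F m n k T lam mu Astar B')) := by
      have h := (hGcont.tendsto (Astar, B')).comp (Filter.Tendsto.prodMk_nhds hlimA (tendsto_const_nhds (x := B') (α := ℕ)))
      exact h
    refine le_of_tendsto_of_tendsto (hc.comp hφ.tendsto_atTop) h1 ?_
    filter_upwards [Filter.eventually_ge_atTop 1] with ℓ hℓ
    have hφℓ : 1 ≤ φ ℓ := le_trans hℓ (hφ.le_apply)
    have h2 := hB (φ ℓ - 1) B'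
    rw [Nat.sub_add_cancel hφℓ] at h2
    exact h2
end
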